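/- Let P satisfy the Doeblin condition with constant a ∈ (0,1) and let f be bounded with |f|_* = inf_λ sup_x |f(x) − λ|. Then there exists a unique bounded solution ψ of the Poisson equation (P − I)ψ = μf − f, given by ψ = Σ_{k=0}^∞ P^k(f − μf), and it satisfies |ψ|_∞ ≤ 2|f|_*/a. -/

import Mathlib

open MeasureTheory ProbabilityTheory Filter
open scoped ENNReal

/-- Total variation distance between two measures. -/
noncomputable def tvDist {X : Type*} [MeasurableSpace X] (μ ν : Measure X) : ℝ :=
  ⨆ s : {s : Set X // MeasurableSet s}, |(μ s.1).toReal - (ν s.1).toReal|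

/-- One step of a Markov kernel acting on a measure. -/
noncomputable def stepK {X : Type*} [MeasurableSpace X] (κ : Kernel X X) (ν : Measure X) :
    Measure X :=
  ν.bind (fun x => κ x)

/-- `|f|_* = inf_λ sup_x |f x - λ|`. -/
noncomputable def fstar {X : Type*} (f : X → ℝ) : ℝ := ⨅ l : ℝ, ⨆ x, |f x - l|

section Helpers

variable {X : Type*} [MeasurableSpace X]

lemma integrable_of_bdd {ν : Measure X} [IsFiniteMeasure ν] {g : X → ℝ} (hg : Measurable g)
    {M : ℝ} (hM : ∀ x, |g x| ≤ M) : Integrable g ν :=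
  (integrable_const M).mono' hg.aestronglyMeasurable
    (Eventually.of_forall fun x => by simpa [Real.norm_eq_abs] using hM x)

lemma abs_integral_le {ν : Measure X} [IsProbabilityMeasure ν] {g : X → ℝ} {M : ℝ}
    (hM : ∀ x, |g x| ≤ M) : |∫ x, g x ∂ν| ≤ M := by
  have h := norm_integral_le_of_norm_le_const (μ := ν) (f := g) (C := M)
    (Eventually.of_forall fun x => by simpa [Real.norm_eq_abs] using hM x)
  simpa [Real.norm_eq_abs] using h

lemma tvDist_bddAbove (ν₁ ν₂ : Measure X) [IsProbabilityMeasure ν₁] [IsProbabilityMeasure ν₂] :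
    BddAbove (Set.range fun s : {s : Set X // MeasurableSet s} =>
      |(ν₁ s.1).toReal - (ν₂ s.1).toReal|) := by
  refine ⟨2, ?_⟩
  rintro r ⟨s, rfl⟩
  have h1 : (ν₁ s.1).toReal ≤ 1 := by
    have := prob_le_one (μ := ν₁) (s := s.1)
    simpa using ENNReal.toReal_mono ENNReal.one_ne_top this
  have h2 : (ν₂ s.1).toReal ≤ 1 := by
    have := prob_le_one (μ := ν₂) (s := s.1)
    simpa using ENNReal.toReal_mono ENNReal.one_ne_top this
  have h3 : (0:ℝ) ≤ (ν₁ s.1).toReal := ENNReal.toReal_nonneg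
  have h4 : (0:ℝ) ≤ (ν₂ s.1).toReal := ENNReal.toReal_nonneg
  rw [abs_sub_le_iff]
  constructor <;> linarith

lemma abs_le_tvDist (ν₁ ν₂ : Measure X) [IsProbabilityMeasure ν₁] [IsProbabilityMeasure ν₂]
    {s : Set X} (hs : MeasurableSet s) :
    |(ν₁ s).toReal - (ν₂ s).toReal| ≤ tvDist ν₁ ν₂ :=
  le_ciSup (tvDist_bddAbove ν₁ ν₂) (⟨s, hs⟩ : {s : Set X // MeasurableSet s})

lemma tvDist_nonneg (ν₁ ν₂ : Measure X) [IsProbabilityMeasure ν₁] [IsProbabilityMeasure ν₂] :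
    0 ≤ tvDist ν₁ ν₂ := by
  have := abs_le_tvDist ν₁ ν₂ MeasurableSet.empty
  simpa using this

lemma piece_bound (ν₁ ν₂ : Measure X) [IsProbabilityMeasure ν₁] [IsProbabilityMeasure ν₂]
    {g : X → ℝ} (hg : Measurable g) {M : ℝ} (hM : ∀ x, |g x| ≤ M)
    {i : Set X} (hi : MeasurableSet i) (hle : ν₂.restrict i ≤ ν₁.restrict i) :
    |(∫ x in i, g x ∂ν₁) - ∫ x in i, g x ∂ν₂| ≤ M * ((ν₁ i).toReal - (ν₂ i).toReal) := by
  set ρ : Measure X := ν₁.restrict i - ν₂.restrict i with hρ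
  have hadd : ρ + ν₂.restrict i = ν₁.restrict i := by
    rw [hρ]; exact Measure.sub_add_cancel_of_le hle
  have hint1 : Integrable g ρ := integrable_of_bdd hg hM
  have hint2 : Integrable g (ν₂.restrict i) := integrable_of_bdd hg hM
  have hsplit : (∫ x in i, g x ∂ν₁) = (∫ x, g x ∂ρ) + ∫ x in i, g x ∂ν₂ := by
    rw [← hadd, integral_add_measure hint1 hint2]
  have hρuniv : ρ Set.univ = ν₁ i - ν₂ i := by
    rw [hρ, Measure.sub_apply MeasurableSet.univ hle]
    simp [Measure.restrict_apply_univ]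
  have hρtoReal : (ρ Set.univ).toReal = (ν₁ i).toReal - (ν₂ i).toReal := by
    rw [hρuniv, ENNReal.toReal_sub_of_le ?_ (measure_ne_top _ _)]
    have := hle Set.univ
    simpa [Measure.restrict_apply_univ] using this
  have hbnd : |∫ x, g x ∂ρ| ≤ M * (ρ Set.univ).toReal := by
    have h := norm_integral_le_of_norm_le_const (μ := ρ) (f := g) (C := M)
      (Eventually.of_forall fun x => by simpa [Real.norm_eq_abs] using hM x)
    simpa [Real.norm_eq_abs, Measure.real] using h
  rw [hsplit]
  simpa [hρtoReal] using hbnd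

end Helpers

lemma integral_diff_le_tv {X : Type*} [MeasurableSpace X] [Nonempty X]
    (ν₁ ν₂ : Measure X) [IsProbabilityMeasure ν₁] [IsProbabilityMeasure ν₂]
    {h : X → ℝ} (hh : Measurable h) {l M : ℝ} (hM : ∀ x, |h x - l| ≤ M) :
    |(∫ x, h x ∂ν₁) - ∫ x, h x ∂ν₂| ≤ 2 * M * tvDist ν₁ ν₂ := by
  set g : X → ℝ := fun x => h x - l with hgdef
  have hgmeas : Measurable g := hh.sub measurable_const
  have hgM : ∀ x, |g x| ≤ M := hM
  have hred : (∫ x, h x ∂ν₁) - ∫ x, h x ∂ν₂ = (∫ x, g x ∂ν₁) - ∫ x, g x ∂ν₂ := by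
    have e1 : (∫ x, g x ∂ν₁) = (∫ x, h x ∂ν₁) - l := by
      rw [hgdef, integral_sub (integrable_of_bdd hh (fun x => le_trans (by
        have := hM x; have := abs_nonneg (h x - l); nlinarith [abs_sub_abs_le_abs_sub (h x) l,
          abs_nonneg (h x), abs_nonneg l]) (le_refl (M + |l|))) ) (integrable_const l)]
      simp
    have e2 : (∫ x, g x ∂ν₂) = (∫ x, h x ∂ν₂) - l := by
      rw [hgdef, integral_sub (integrable_of_bdd hh (fun x => le_trans (by
        have := hM x; nlinarith [abs_sub_abs_le_abs_sub (h x) l,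
          abs_nonneg (h x), abs_nonneg l]) (le_refl (M + |l|))) ) (integrable_const l)]
      simp
    rw [e1, e2]; ring
  rw [hred]
  obtain ⟨i, hi, hpos, hneg⟩ :=
    (ν₁.toSignedMeasure - ν₂.toSignedMeasure).exists_compl_positive_negative
  have hsub_apply : ∀ {A : Set X}, MeasurableSet A →
      (ν₁.toSignedMeasure - ν₂.toSignedMeasure) A = (ν₁ A).toReal - (ν₂ A).toReal := by
    intro A hA
    rw [VectorMeasure.sub_apply, Measure.toSignedMeasure_apply_measurable hA,
      Measure.toSignedMeasure_apply_measurable hA]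
    rfl
  have hle₁ : ν₂.restrict i ≤ ν₁.restrict i := by
    refine Measure.le_iff.mpr fun A hA => ?_
    rw [Measure.restrict_apply hA, Measure.restrict_apply hA]
    have hAi : MeasurableSet (A ∩ i) := hA.inter hi
    have h0 := (VectorMeasure.restrict_le_restrict_iff _ _ hi).1 hpos hAi
      Set.inter_subset_right
    rw [hsub_apply hAi] at h0
    simp only [VectorMeasure.zero_apply] at h0
    exact (ENNReal.toReal_le_toReal (measure_ne_top _ _) (measure_ne_top _ _)).mp (by linarith)
  have hle₂ : ν₁.restrict iᶜ ≤ ν₂.restrict iᶜ := by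
    refine Measure.le_iff.mpr fun A hA => ?_
    rw [Measure.restrict_apply hA, Measure.restrict_apply hA]
    have hAi : MeasurableSet (A ∩ iᶜ) := hA.inter hi.compl
    have h0 := (VectorMeasure.restrict_le_restrict_iff _ _ hi.compl).1 hneg hAi
      Set.inter_subset_right
    rw [hsub_apply hAi] at h0
    simp only [VectorMeasure.zero_apply] at h0
    exact (ENNReal.toReal_le_toReal (measure_ne_top _ _) (measure_ne_top _ _)).mp (by linarith)
  have hM0 : 0 ≤ M := le_trans (abs_nonneg _) (hM (Classical.arbitrary X))
  have hp1 := piece_bound ν₁ ν₂ hgmeas hgM hi hle₁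
  have hp2 := piece_bound ν₂ ν₁ hgmeas hgM hi.compl hle₂
  have htv1 : (ν₁ i).toReal - (ν₂ i).toReal ≤ tvDist ν₁ ν₂ :=
    le_trans (le_abs_self _) (abs_le_tvDist ν₁ ν₂ hi)
  have htv2 : (ν₂ iᶜ).toReal - (ν₁ iᶜ).toReal ≤ tvDist ν₁ ν₂ := by
    refine le_trans ?_ (abs_le_tvDist ν₁ ν₂ hi.compl)
    rw [abs_sub_comm]; exact le_abs_self _
  have hint₁ : Integrable g ν₁ := integrable_of_bdd hgmeas hgM
  have hint₂ : Integrable g ν₂ := integrable_of_bdd hgmeas hgM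
  have hsplit₁ : (∫ x, g x ∂ν₁) = (∫ x in i, g x ∂ν₁) + ∫ x in iᶜ, g x ∂ν₁ :=
    (integral_add_compl hi hint₁).symm
  have hsplit₂ : (∫ x, g x ∂ν₂) = (∫ x in i, g x ∂ν₂) + ∫ x in iᶜ, g x ∂ν₂ :=
    (integral_add_compl hi hint₂).symm
  have habs1 := abs_le.mp hp1
  have habs2 := abs_le.mp hp2
  have hb1 : M * ((ν₁ i).toReal - (ν₂ i).toReal) ≤ M * tvDist ν₁ ν₂ :=
    mul_le_mul_of_nonneg_left htv1 hM0
  have hb2 : M * ((ν₂ iᶜ).toReal - (ν₁ iᶜ).toReal) ≤ M * tvDist ν₁ ν₂ :=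
    mul_le_mul_of_nonneg_left htv2 hM0
  rw [hsplit₁, hsplit₂, abs_le]
  constructor <;> [skip; skip] <;>
    · cases' habs1 with a1 a2
      cases' habs2 with b1 b2
      linarith

lemma measurable_kernel_integral {X : Type*} [MeasurableSpace X]
    (κ : Kernel X X) [IsSFiniteKernel κ] {g : X → ℝ} (hg : Measurable g) :
    Measurable fun x => ∫ y, g y ∂κ x := by
  have hsm : StronglyMeasurable (fun p : X × X => g p.2) :=
    (hg.comp measurable_snd).stronglyMeasurable
  exact hsm.integral_kernel_prod_right'.measurable

lemma osc_step {X : Type*} [MeasurableSpace X] [Nonempty X]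
    (κ : Kernel X X) [IsMarkovKernel κ] {a : ℝ} (ha1 : a ≤ 1)
    (hD : ∀ x y : X, tvDist (κ x) (κ y) ≤ 1 - a)
    {h : X → ℝ} (hh : Measurable h) {M E : ℝ} (hbdd : ∀ x, |h x| ≤ M)
    (hE : ∀ x y, |h x - h y| ≤ E) (x y : X) :
    |(∫ z, h z ∂κ x) - ∫ z, h z ∂κ y| ≤ (1 - a) * E := by
  have hE0 : 0 ≤ E := le_trans (abs_nonneg _) (hE (Classical.arbitrary X) (Classical.arbitrary X))
  set S : ℝ := ⨆ z, h z with hS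
  set I : ℝ := ⨅ z, h z with hI
  have bddA : BddAbove (Set.range h) := ⟨M, by rintro _ ⟨z, rfl⟩; exact (abs_le.mp (hbdd z)).2⟩
  have bddB : BddBelow (Set.range h) := ⟨-M, by rintro _ ⟨z, rfl⟩; exact (abs_le.mp (hbdd z)).1⟩
  have hSI : S ≤ I + E := by
    refine ciSup_le fun z => ?_
    have : h z - E ≤ I := le_ciInf fun w => by
      have := (abs_le.mp (hE z w)).2; linarith
    linarith
  have hcenter : ∀ z, |h z - (S + I) / 2| ≤ E / 2 := by
    intro z
    have h1 : h z ≤ S := le_ciSup bddA z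
    have h2 : I ≤ h z := ciInf_le bddB z
    rw [abs_le]; constructor <;> linarith
  have key := integral_diff_le_tv (κ x) (κ y) hh hcenter
  have htv0 : 0 ≤ tvDist (κ x) (κ y) := tvDist_nonneg _ _
  calc |(∫ z, h z ∂κ x) - ∫ z, h z ∂κ y| ≤ 2 * (E / 2) * tvDist (κ x) (κ y) := key
    _ = E * tvDist (κ x) (κ y) := by ring
    _ ≤ E * (1 - a) := mul_le_mul_of_nonneg_left (hD x y) hE0
    _ = (1 - a) * E := mul_comm _ _

lemma integral_bind_kernel {X : Type*} [MeasurableSpace X] [Nonempty X]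
    (κ : Kernel X X) [IsMarkovKernel κ] (μ : Measure X) [IsProbabilityMeasure μ]
    {g : X → ℝ} (hg : Measurable g) {M : ℝ} (hM : ∀ x, |g x| ≤ M) :
    ∫ y, g y ∂(μ.bind fun x => κ x) = ∫ x, ∫ y, g y ∂κ x ∂μ := by
  have hM0 : 0 ≤ M := le_trans (abs_nonneg _) (hM (Classical.arbitrary X))
  have hκm : Measurable fun x => (κ x : Measure X) := κ.measurable
  have hprob : IsProbabilityMeasure (μ.bind fun x => κ x) := by
    constructor
    rw [Measure.bind_apply MeasurableSet.univ hκm.aemeasurable]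
    simp
  set p : X → ℝ≥0∞ := fun x => ENNReal.ofReal (g x) with hp
  set n : X → ℝ≥0∞ := fun x => ENNReal.ofReal (-g x) with hn
  have hpm : Measurable p := hg.ennreal_ofReal
  have hnm : Measurable n := hg.neg.ennreal_ofReal
  have hpbound : ∀ (ν : Measure X), IsProbabilityMeasure ν →
      (∫⁻ x, p x ∂ν) ≤ ENNReal.ofReal M := by
    intro ν hν
    calc (∫⁻ x, p x ∂ν) ≤ ∫⁻ _, ENNReal.ofReal M ∂ν :=
          lintegral_mono fun z => ENNReal.ofReal_le_ofReal (le_trans (le_abs_self _) (hM z))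
      _ = ENNReal.ofReal M := by simp
  have hnbound : ∀ (ν : Measure X), IsProbabilityMeasure ν →
      (∫⁻ x, n x ∂ν) ≤ ENNReal.ofReal M := by
    intro ν hν
    calc (∫⁻ x, n x ∂ν) ≤ ∫⁻ _, ENNReal.ofReal M ∂ν :=
          lintegral_mono fun z => ENNReal.ofReal_le_ofReal
            (le_trans (neg_le_abs _) (hM z))
      _ = ENNReal.ofReal M := by simp
  have hrepr : ∀ (ν : Measure X), IsProbabilityMeasure ν →
      ∫ x, g x ∂ν = (∫⁻ x, p x ∂ν).toReal - (∫⁻ x, n x ∂ν).toReal := by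
    intro ν hν
    exact integral_eq_lintegral_pos_part_sub_lintegral_neg_part (integrable_of_bdd hg hM)
  have hbindp : (∫⁻ x, p x ∂(μ.bind fun x => κ x)) = ∫⁻ x, ∫⁻ y, p y ∂κ x ∂μ :=
    Measure.lintegral_bind hκm.aemeasurable hpm.aemeasurable
  have hbindn : (∫⁻ x, n x ∂(μ.bind fun x => κ x)) = ∫⁻ x, ∫⁻ y, n y ∂κ x ∂μ :=
    Measure.lintegral_bind hκm.aemeasurable hnm.aemeasurable
  have hAmeas : Measurable fun x => (∫⁻ y, p y ∂κ x).toReal :=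
    (Measurable.lintegral_kernel hpm).ennreal_toReal
  have hBmeas : Measurable fun x => (∫⁻ y, n y ∂κ x).toReal :=
    (Measurable.lintegral_kernel hnm).ennreal_toReal
  have hAbd : ∀ x, |(∫⁻ y, p y ∂κ x).toReal| ≤ M := by
    intro x
    rw [abs_of_nonneg ENNReal.toReal_nonneg]
    have := hpbound (κ x) inferInstance
    calc (∫⁻ y, p y ∂κ x).toReal ≤ (ENNReal.ofReal M).toReal :=
        ENNReal.toReal_mono ENNReal.ofReal_ne_top this
      _ = M := ENNReal.toReal_ofReal hM0
  have hBbd : ∀ x, |(∫⁻ y, n y ∂κ x).toReal| ≤ M := by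
    intro x
    rw [abs_of_nonneg ENNReal.toReal_nonneg]
    have := hnbound (κ x) inferInstance
    calc (∫⁻ y, n y ∂κ x).toReal ≤ (ENNReal.ofReal M).toReal :=
        ENNReal.toReal_mono ENNReal.ofReal_ne_top this
      _ = M := ENNReal.toReal_ofReal hM0
  have hAint : (∫ x, (∫⁻ y, p y ∂κ x).toReal ∂μ) = (∫⁻ x, ∫⁻ y, p y ∂κ x ∂μ).toReal := by
    refine integral_toReal (Measurable.lintegral_kernel hpm).aemeasurable ?_
    exact Eventually.of_forall fun x =>
      lt_of_le_of_lt (hpbound (κ x) inferInstance) ENNReal.ofReal_lt_top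
  have hBint : (∫ x, (∫⁻ y, n y ∂κ x).toReal ∂μ) = (∫⁻ x, ∫⁻ y, n y ∂κ x ∂μ).toReal := by
    refine integral_toReal (Measurable.lintegral_kernel hnm).aemeasurable ?_
    exact Eventually.of_forall fun x =>
      lt_of_le_of_lt (hnbound (κ x) inferInstance) ENNReal.ofReal_lt_top
  calc ∫ y, g y ∂(μ.bind fun x => κ x)
      = (∫⁻ x, p x ∂(μ.bind fun x => κ x)).toReal
        - (∫⁻ x, n x ∂(μ.bind fun x => κ x)).toReal := hrepr _ hprob
    _ = (∫⁻ x, ∫⁻ y, p y ∂κ x ∂μ).toReal - (∫⁻ x, ∫⁻ y, n y ∂κ x ∂μ).toReal := by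
        rw [hbindp, hbindn]
    _ = (∫ x, (∫⁻ y, p y ∂κ x).toReal ∂μ) - ∫ x, (∫⁻ y, n y ∂κ x).toReal ∂μ := by
        rw [hAint, hBint]
    _ = ∫ x, ((∫⁻ y, p y ∂κ x).toReal - (∫⁻ y, n y ∂κ x).toReal) ∂μ :=
        (integral_sub (integrable_of_bdd hAmeas hAbd) (integrable_of_bdd hBmeas hBbd)).symm
    _ = ∫ x, ∫ y, g y ∂κ x ∂μ := by
        refine integral_congr_ae (Eventually.of_forall fun x => ?_)
        exact (hrepr (κ x) inferInstance).symm

theorem poisson_equation_solution {X : Type*} [TopologicalSpace X] [PolishSpace X]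
    [MeasurableSpace X] [BorelSpace X] [Nonempty X]
    (κ : Kernel X X) [IsMarkovKernel κ] (a : ℝ) (ha : a ∈ Set.Ioo (0:ℝ) 1)
    (hD : ∀ x y : X, tvDist (κ x) (κ y) ≤ 1 - a)
    (μ : Measure X) [IsProbabilityMeasure μ] (hμ : stepK κ μ = μ)
    (f : X → ℝ) (hf : Measurable f) (C : ℝ) (hC : ∀ x, |f x| ≤ C) :
    ∃ ψ : X → ℝ,
      (Measurable ψ ∧ (∃ D, ∀ x, |ψ x| ≤ D) ∧ (∫ x, ψ x ∂μ) = 0 ∧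
        (∀ x, (∫ y, ψ y ∂(κ x)) - ψ x = (∫ y, f y ∂μ) - f x)) ∧
      (∀ x, |ψ x| ≤ 2 * fstar f / a) ∧
      (∀ x, HasSum (fun k : ℕ =>
          ((fun g : X → ℝ => fun z => ∫ y, g y ∂(κ z))^[k]
            (fun y => f y - ∫ y, f y ∂μ)) x) (ψ x)) ∧
      ∀ ψ' : X → ℝ, Measurable ψ' → (∃ D, ∀ x, |ψ' x| ≤ D) → (∫ x, ψ' x ∂μ) = 0 →
        (∀ x, (∫ y, ψ' y ∂(κ x)) - ψ' x = (∫ y, f y ∂μ) - f x) → ψ' = ψ := by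
  obtain ⟨ha0, ha1⟩ := ha
  have hr0 : (0:ℝ) ≤ 1 - a := by linarith
  have hr1 : (1:ℝ) - a < 1 := by linarith
  set mf : ℝ := ∫ y, f y ∂μ with hmf
  set g : ℕ → X → ℝ := fun k =>
    (fun (h : X → ℝ) => fun z => ∫ y, h y ∂(κ z))^[k] (fun y => f y - mf) with hgdef
  have hg0 : g 0 = fun y => f y - mf := rfl
  have hgsucc : ∀ k, g (k+1) = fun x => ∫ y, g k y ∂κ x := fun k => by
    simp only [hgdef, Function.iterate_succ_apply']
  -- fstar facts
  have hbddf : ∀ l : ℝ, BddAbove (Set.range fun z => |f z - l|) := fun l =>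
    ⟨C + |l|, by
      rintro _ ⟨z, rfl⟩
      calc |f z - l| ≤ |f z| + |l| := abs_sub _ _
        _ ≤ C + |l| := by linarith [hC z]⟩
  set E : ℝ := 2 * fstar f with hE
  have hstar : ∀ x y, |f x - f y| ≤ E := by
    intro x y
    have h2 : ∀ l : ℝ, |f x - f y| / 2 ≤ ⨆ z, |f z - l| := by
      intro l
      have hx := le_ciSup (hbddf l) x
      have hy := le_ciSup (hbddf l) y
      have : |f x - f y| ≤ |f x - l| + |f y - l| := by
        calc |f x - f y| = |(f x - l) - (f y - l)| := by ring_nf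
          _ ≤ |f x - l| + |f y - l| := abs_sub _ _
      linarith
    have : |f x - f y| / 2 ≤ fstar f := le_ciInf h2
    rw [hE]; linarith
  have hE0 : 0 ≤ E :=
    le_trans (abs_nonneg _) (hstar (Classical.arbitrary X) (Classical.arbitrary X))
  have hbase : ∀ x, |f x - mf| ≤ E := by
    intro x
    have h2 : ∀ l : ℝ, |f x - mf| / 2 ≤ ⨆ z, |f z - l| := by
      intro l
      have hx := le_ciSup (hbddf l) x
      have hml : |mf - l| ≤ ⨆ z, |f z - l| := by
        have heq : (∫ y, (f y - l) ∂μ) = mf - l := by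
          rw [integral_sub (integrable_of_bdd hf hC) (integrable_const l)]
          simp [hmf]
        rw [← heq]
        exact abs_integral_le fun y => le_ciSup (hbddf l) y
      have : |f x - mf| ≤ |f x - l| + |mf - l| := by
        calc |f x - mf| = |(f x - l) - (mf - l)| := by ring_nf
          _ ≤ |f x - l| + |mf - l| := abs_sub _ _
      linarith
    have : |f x - mf| / 2 ≤ fstar f := le_ciInf h2
    rw [hE]; linarith
  -- main induction
  have key : ∀ k : ℕ, Measurable (g k) ∧ (∀ x, |g k x| ≤ E * (1-a)^k) ∧
      (∀ x y, |g k x - g k y| ≤ E * (1-a)^k) ∧ (∫ x, g k x ∂μ) = 0 := by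
    intro k
    induction k with
    | zero =>
      refine ⟨hf.sub measurable_const, ?_, ?_, ?_⟩
      · intro x; simpa [hg0] using hbase x
      · intro x y
        have : g 0 x - g 0 y = f x - f y := by simp [hg0]
        rw [this]; simpa using hstar x y
      · rw [hg0, integral_sub (integrable_of_bdd hf hC) (integrable_const mf)]
        simp [hmf]
    | succ k ih =>
      obtain ⟨hm, hb, ho, hi⟩ := ih
      have hm' : Measurable (g (k+1)) := by
        rw [hgsucc k]; exact measurable_kernel_integral κ hm
      have hbc : ∀ x, |g (k+1) x| ≤ E * (1-a)^k := by
        intro x; rw [hgsucc k]; exact abs_integral_le hb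
      have hi' : (∫ x, g (k+1) x ∂μ) = 0 := by
        have h1 : (∫ x, g (k+1) x ∂μ) = ∫ x, ∫ y, g k y ∂κ x ∂μ := by rw [hgsucc k]
        have h2 : (∫ y, g k y ∂(μ.bind fun x => κ x)) = ∫ x, ∫ y, g k y ∂κ x ∂μ :=
          integral_bind_kernel κ μ hm hb
        have h3 : (μ.bind fun x => κ x) = μ := hμ
        rw [h1, ← h2, h3, hi]
      have ho' : ∀ x y, |g (k+1) x - g (k+1) y| ≤ (1-a) * (E * (1-a)^k) := by
        intro x y
        rw [hgsucc k]
        exact osc_step κ (le_of_lt ha1) hD hm hb ho x y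
      have hpow : E * (1-a)^(k+1) = (1-a) * (E * (1-a)^k) := by ring
      refine ⟨hm', ?_, ?_, hi'⟩
      · intro x
        have heq : g (k+1) x = ∫ y, (g (k+1) x - g (k+1) y) ∂μ := by
          rw [integral_sub (integrable_const _) (integrable_of_bdd hm' hbc)]
          simp [hi']
        rw [hpow, heq]
        exact abs_integral_le fun y => ho' x y
      · intro x y; rw [hpow]; exact ho' x y
  -- summability
  have hgeo : Summable (fun k : ℕ => E * (1-a)^k) :=
    (summable_geometric_of_lt_one hr0 hr1).mul_left E
  have hsummable : ∀ x, Summable fun k => g k x := fun x =>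
    Summable.of_norm_bounded hgeo fun k => by
      simpa [Real.norm_eq_abs] using (key k).2.1 x
  set ψ : X → ℝ := fun x => ∑' k, g k x with hψdef
  have hsum : ∀ x, HasSum (fun k => g k x) (ψ x) := fun x => (hsummable x).hasSum
  -- bound on ψ
  have htsum_geo : (∑' k : ℕ, E * (1-a)^k) = E / a := by
    rw [tsum_mul_left, tsum_geometric_of_lt_one hr0 hr1]
    rw [show (1 - (1-a)) = a by ring, div_eq_mul_inv]
  have hψbd : ∀ x, |ψ x| ≤ E / a := by
    intro x
    have h1 : |ψ x| ≤ ∑' k, |g k x| := by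
      simpa [Real.norm_eq_abs] using norm_tsum_le_tsum_norm ((hsummable x).norm)
    have h2 : (∑' k, |g k x|) ≤ ∑' k : ℕ, E * (1-a)^k :=
      Summable.tsum_le_tsum (fun k => (key k).2.1 x) (hsummable x).abs hgeo
    rw [← htsum_geo]; linarith
  -- measurability of ψ
  have hψmeas : Measurable ψ := by
    refine measurable_of_tendsto_metrizable
      (f := fun n x => ∑ k ∈ Finset.range n, g k x)
      (fun n => Finset.measurable_sum _ fun k _ => (key k).1) ?_
    rw [tendsto_pi_nhds]
    exact fun x => (hsum x).tendsto_sum_nat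
  -- swapping integral and sum
  have hlint : ∀ (ν : Measure X), IsProbabilityMeasure ν →
      (∑' k : ℕ, ∫⁻ y, ‖g k y‖₊ ∂ν) ≠ ⊤ := by
    intro ν hν
    have hb : ∀ k : ℕ, (∫⁻ y, ‖g k y‖₊ ∂ν) ≤ ENNReal.ofReal (E * (1-a)^k) := by
      intro k
      calc (∫⁻ y, ‖g k y‖₊ ∂ν) ≤ ∫⁻ _, ENNReal.ofReal (E * (1-a)^k) ∂ν := by
            refine lintegral_mono fun y => ?_
            rw [show (‖g k y‖₊ : ℝ≥0∞) = ENNReal.ofReal |g k y| from Real.enorm_eq_ofReal_abs _]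
            exact ENNReal.ofReal_le_ofReal ((key k).2.1 y)
        _ = ENNReal.ofReal (E * (1-a)^k) := by simp
    refine ne_top_of_le_ne_top ?_ (ENNReal.tsum_le_tsum hb)
    rw [← ENNReal.ofReal_tsum_of_nonneg
      (fun k => mul_nonneg hE0 (pow_nonneg hr0 k)) hgeo]
    exact ENNReal.ofReal_ne_top
  have hswap : ∀ (ν : Measure X), IsProbabilityMeasure ν →
      (∫ y, ψ y ∂ν) = ∑' k, ∫ y, g k y ∂ν := by
    intro ν hν
    exact integral_tsum (fun k => ((key k).1).aestronglyMeasurable) (hlint ν hν)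
  have hψintμ : (∫ x, ψ x ∂μ) = 0 := by
    rw [hswap μ inferInstance]
    have : ∀ k : ℕ, (∫ x, g k x ∂μ) = 0 := fun k => (key k).2.2.2
    simp [this]
  have hψeq : ∀ x, (∫ y, ψ y ∂κ x) - ψ x = mf - f x := by
    intro x
    have h1 : (∫ y, ψ y ∂κ x) = ∑' k, g (k+1) x := by
      rw [hswap (κ x) inferInstance]
      exact tsum_congr fun k => (congrFun (hgsucc k) x).symm
    have h2 : g 0 x + ∑' k, g (k+1) x = ψ x := by
      have h3 := Summable.sum_add_tsum_nat_add (f := fun k => g k x) 1 (hsummable x)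
      simpa using h3
    have h4 : g 0 x = f x - mf := congrFun hg0 x
    rw [h1]
    linarith [h2, h4.symm.le, h4.le]
  refine ⟨ψ, ⟨hψmeas, ⟨E / a, hψbd⟩, hψintμ, hψeq⟩, ?_, fun x => hsum x, ?_⟩
  · intro x
    have := hψbd x
    rw [hE] at this
    simpa [div_eq_mul_inv] using this
  -- uniqueness
  · intro ψ' hψ'meas hDbd hψ'int hψ'eq
    obtain ⟨D, hD'⟩ := hDbd
    set h : X → ℝ := fun x => ψ' x - ψ x with hhdef
    have hhm : Measurable h := hψ'meas.sub hψmeas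
    have hD0 : 0 ≤ D := le_trans (abs_nonneg _) (hD' (Classical.arbitrary X))
    set D2 : ℝ := D + E / a with hD2
    have hhbd : ∀ x, |h x| ≤ D2 := by
      intro x
      calc |h x| = |ψ' x - ψ x| := rfl
        _ ≤ |ψ' x| + |ψ x| := abs_sub _ _
        _ ≤ D2 := by rw [hD2]; linarith [hD' x, hψbd x]
    have hhint : Integrable h μ := integrable_of_bdd hhm hhbd
    have hhμ : (∫ x, h x ∂μ) = 0 := by
      have := integral_sub (integrable_of_bdd hψ'meas hD') (integrable_of_bdd hψmeas hψbd)
        (μ := μ)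
      rw [hhdef]
      simp only [this, hψ'int, hψintμ, sub_zero]
    have hfix : ∀ x, (∫ z, h z ∂κ x) = h x := by
      intro x
      have e1 : (∫ z, h z ∂κ x) = (∫ z, ψ' z ∂κ x) - ∫ z, ψ z ∂κ x := by
        rw [hhdef]
        exact integral_sub (integrable_of_bdd hψ'meas hD') (integrable_of_bdd hψmeas hψbd)
      have e2 := hψ'eq x
      have e3 := hψeq x
      rw [e1]; rw [hhdef]; simp only []
      linarith
    set Eh : ℝ := ⨆ p : X × X, |h p.1 - h p.2| with hEhdef
    have hbddEh : BddAbove (Set.range fun p : X × X => |h p.1 - h p.2|) :=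
      ⟨2 * D2, by
        rintro _ ⟨p, rfl⟩
        calc |h p.1 - h p.2| ≤ |h p.1| + |h p.2| := abs_sub _ _
          _ ≤ 2 * D2 := by linarith [hhbd p.1, hhbd p.2]⟩
    have hEh : ∀ x y, |h x - h y| ≤ Eh := fun x y => le_ciSup hbddEh (x, y)
    have hcontr : ∀ x y, |h x - h y| ≤ (1-a) * Eh := by
      intro x y
      have := osc_step κ (le_of_lt ha1) hD hhm hhbd hEh x y
      rwa [hfix x, hfix y] at this
    have hEhle : Eh ≤ (1-a) * Eh := by
      refine ciSup_le fun p => hcontr p.1 p.2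
    have hEh0 : 0 ≤ Eh := le_trans (abs_nonneg _)
      (hEh (Classical.arbitrary X) (Classical.arbitrary X))
    have hEhz : Eh ≤ 0 := by nlinarith
    have hhconst : ∀ x y, h x = h y := by
      intro x y
      have := hEh x y
      have : |h x - h y| ≤ 0 := le_trans this hEhz
      have := abs_nonpos_iff.mp this
      linarith [sub_eq_zero.mp this]
    have hzero : ∀ x, h x = 0 := by
      intro x
      have heq : h x = ∫ y, (h x - h y) ∂μ := by
        rw [integral_sub (integrable_const _) hhint]
        simp [hhμ]
      have hz : (fun y => h x - h y) = fun _ : X => (0:ℝ) := by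
        funext y
        rw [hhconst x y]; ring
      rw [heq, hz, integral_zero]
    funext x
    have := hzero x
    rw [hhdef] at this
    simp only [] at this
    linarith
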